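/- For all θ in (0, π/2] and all real x, one has 0 ≤ (sinh((π−θ)x)/sinh(πx))² − (sinh(θx)/sinh(πx))² ≤ 1 − 2θ/π, where at x = 0 the quotients are understood as their limits (π−θ)/π and θ/π. -/

import Mathlib

open Real

lemma sinh_mul_le (r t : ℝ) (hr0 : 0 ≤ r) (hr1 : r ≤ 1) (ht : 0 ≤ t) :
    Real.sinh (r * t) ≤ r * Real.sinh t := by
  have key : MonotoneOn (fun t : ℝ => r * Real.sinh t - Real.sinh (r * t)) (Set.Ici 0) := by
    apply monotoneOn_of_deriv_nonneg (convex_Ici 0)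
    · fun_prop
    · fun_prop
    · intro y hy
      simp only [interior_Ici, Set.mem_Ioi] at hy
      have : deriv (fun t : ℝ => r * Real.sinh t - Real.sinh (r * t)) y
          = r * Real.cosh y - r * Real.cosh (r * y) := by
        have h1 : HasDerivAt (fun t : ℝ => r * Real.sinh t) (r * Real.cosh y) y :=
          (Real.hasDerivAt_sinh y).const_mul r
        have h2 : HasDerivAt (fun t : ℝ => Real.sinh (r * t)) (Real.cosh (r * y) * r) y := by
          have := (Real.hasDerivAt_sinh (r * y)).comp y ((hasDerivAt_id y).const_mul r)
          exact this.congr_deriv (by ring)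
        have := (h1.sub h2).deriv
        rw [show (fun t : ℝ => r * Real.sinh t - Real.sinh (r * t)) = (fun t : ℝ => r * Real.sinh t) - (fun t : ℝ => Real.sinh (r * t)) from rfl, this]; ring
      rw [this]
      have hc : Real.cosh (r * y) ≤ Real.cosh y := by
        rw [Real.cosh_le_cosh]
        rw [abs_of_nonneg (by positivity), abs_of_nonneg hy.le]
        nlinarith
      nlinarith
  have := key (Set.self_mem_Ici) (Set.mem_Ici.2 ht) ht
  simp at this
  linarith

lemma sinh_sq_sub (a b : ℝ) :
    Real.sinh a ^ 2 - Real.sinh b ^ 2 = Real.sinh (a + b) * Real.sinh (a - b) := by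
  have ha := Real.cosh_sq a
  have hb := Real.cosh_sq b
  rw [Real.sinh_add, Real.sinh_sub]
  nlinarith

theorem stmt_0 (θ : ℝ) (hθ : θ ∈ Set.Ioc 0 (π/2)) (x : ℝ) :
    0 ≤ (if x = 0 then (π - θ)/π else Real.sinh ((π - θ)*x) / Real.sinh (π*x))^2
        - (if x = 0 then θ/π else Real.sinh (θ*x) / Real.sinh (π*x))^2 ∧
    (if x = 0 then (π - θ)/π else Real.sinh ((π - θ)*x) / Real.sinh (π*x))^2
        - (if x = 0 then θ/π else Real.sinh (θ*x) / Real.sinh (π*x))^2 ≤ 1 - 2*θ/π := by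
  obtain ⟨hθ0, hθπ⟩ := hθ
  have hπ : (0:ℝ) < π := Real.pi_pos
  by_cases hx : x = 0
  · rw [if_pos hx, if_pos hx]
    constructor
    · rw [div_pow, div_pow, ← sub_div]
      apply div_nonneg _ (by positivity)
      nlinarith
    · rw [div_pow, div_pow, ← sub_div, div_le_iff₀ (by positivity)]
      have h : 2*θ/π*π = 2*θ := div_mul_cancel₀ _ hπ.ne'
      nlinarith
  · simp only [if_neg hx]
    have hs : Real.sinh (π * x) ≠ 0 := by
      simpa [Real.sinh_eq_zero, Real.pi_ne_zero] using hx
    have key : Real.sinh ((π - θ)*x) ^ 2 - Real.sinh (θ*x) ^ 2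
        = Real.sinh (π * x) * Real.sinh ((π - 2*θ) * x) := by
      rw [sinh_sq_sub]
      ring_nf
    have hE : (Real.sinh ((π - θ)*x) / Real.sinh (π*x))^2
        - (Real.sinh (θ*x) / Real.sinh (π*x))^2
        = Real.sinh ((π - 2*θ) * x) / Real.sinh (π * x) := by
      rw [div_pow, div_pow, ← sub_div, key]
      rw [pow_two]
      field_simp
    rw [hE]
    -- signs
    have hc0 : 0 ≤ π - 2*θ := by linarith
    have hc1 : π - 2*θ ≤ π := by linarith
    rcases lt_or_gt_of_ne hx with hneg | hpos
    · have hsx : Real.sinh (π * x) < 0 := by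
        rw [← Real.sinh_zero]
        exact Real.sinh_lt_sinh.2 (by nlinarith)
      have hnx : Real.sinh ((π - 2*θ) * x) ≤ 0 := by
        rw [← Real.sinh_zero]
        exact Real.sinh_le_sinh.2 (by nlinarith)
      constructor
      · exact div_nonneg_iff.2 (Or.inr ⟨hnx, hsx.le⟩)
      · rw [div_le_iff_of_neg hsx]
        have := sinh_mul_le ((π - 2*θ)/π) (π * (-x)) (by positivity)
          (by rw [div_le_one hπ]; linarith) (by nlinarith)
        have heq : (π - 2*θ)/π * (π * (-x)) = (π - 2*θ) * (-x) := by field_simp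
        rw [heq] at this
        have e1 : (π - 2*θ) * -x = -((π - 2*θ)*x) := by ring
        have e2 : π * -x = -(π*x) := by ring
        rw [e1, e2, Real.sinh_neg, Real.sinh_neg] at this
        have h2 : (1 - 2*θ/π) = (π - 2*θ)/π := by field_simp
        rw [h2]
        linarith
    · have hsx : 0 < Real.sinh (π * x) := by
        rw [← Real.sinh_zero]
        exact Real.sinh_lt_sinh.2 (by positivity)
      have hnx : 0 ≤ Real.sinh ((π - 2*θ) * x) := by
        rw [← Real.sinh_zero]
        exact Real.sinh_le_sinh.2 (by positivity)
      constructor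
      · exact div_nonneg hnx hsx.le
      · rw [div_le_iff₀ hsx]
        have := sinh_mul_le ((π - 2*θ)/π) (π * x) (by positivity)
          (by rw [div_le_one hπ]; linarith) (by positivity)
        have heq : (π - 2*θ)/π * (π * x) = (π - 2*θ) * x := by field_simp
        rw [heq] at this
        have h2 : (1 - 2*θ/π) = (π - 2*θ)/π := by field_simp
        rw [h2]
        linarith
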